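/- Let n > 1. In the multivariate polynomial ring R = ℚ[a₁, …, a_n, b₁, …, b_n], define for each k with 1 ≤ k ≤ 2n the element r_k = Σ_{i+j=k, 0≤i≤n, 0≤j≤n} a_i b_j, where by convention a₀ = b₀ = 1. Then the element a₂ − b₂ does not belong to the ideal of R generated by r₁, …, r_{2n}. -/

import Mathlib

open MvPolynomial

/-- The variables `a₁, …, a_n` of `R = ℚ[a₁, …, a_n, b₁, …, b_n]`, with the convention
`a₀ = 1` (and `a_i = 0` for `i > n`). -/
noncomputable def aVar (n : ℕ) (i : ℕ) : MvPolynomial (Fin n ⊕ Fin n) ℚ :=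
  if i = 0 then 1 else if h : i - 1 < n then X (Sum.inl ⟨i - 1, h⟩) else 0

/-- The variables `b₁, …, b_n` of `R = ℚ[a₁, …, a_n, b₁, …, b_n]`, with the convention
`b₀ = 1` (and `b_j = 0` for `j > n`). -/
noncomputable def bVar (n : ℕ) (j : ℕ) : MvPolynomial (Fin n ⊕ Fin n) ℚ :=
  if j = 0 then 1 else if h : j - 1 < n then X (Sum.inr ⟨j - 1, h⟩) else 0

/-- `r_k = Σ_{i+j=k, 0 ≤ i ≤ n, 0 ≤ j ≤ n} a_i b_j`. -/
noncomputable def rPoly (n : ℕ) (k : ℕ) : MvPolynomial (Fin n ⊕ Fin n) ℚ :=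
  ∑ p ∈ (Finset.HasAntidiagonal.antidiagonal k).filter (fun p => p.1 ≤ n ∧ p.2 ≤ n),
    aVar n p.1 * bVar n p.2

open DualNumber in
/-- The evaluation `a₂ ↦ ε`, `b₂ ↦ -ε`, all other variables to `0`. -/
noncomputable def fEval (n : ℕ) : Fin n ⊕ Fin n → DualNumber ℚ
  | .inl i => if (i : ℕ) = 1 then ε else 0
  | .inr j => if (j : ℕ) = 1 then -ε else 0

open DualNumber in
lemma aeval_aVar (n i : ℕ) (hn : 1 < n) :
    aeval (fEval n) (aVar n i) = if i = 0 then 1 else if i = 2 then ε else 0 := by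
  rw [aVar]
  rcases eq_or_ne i 0 with h1 | h1
  · simp [h1]
  rw [if_neg h1, if_neg h1]
  by_cases h2 : i - 1 < n
  · rw [dif_pos h2, aeval_X]
    simp only [fEval]
    split_ifs <;> first | rfl | omega
  · rw [dif_neg h2, map_zero]
    have : i ≠ 2 := by omega
    rw [if_neg this]

open DualNumber in
lemma aeval_bVar (n j : ℕ) (hn : 1 < n) :
    aeval (fEval n) (bVar n j) = if j = 0 then 1 else if j = 2 then -ε else 0 := by
  rw [bVar]
  rcases eq_or_ne j 0 with h1 | h1
  · simp [h1]
  rw [if_neg h1, if_neg h1]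
  by_cases h2 : j - 1 < n
  · rw [dif_pos h2, aeval_X]
    simp only [fEval]
    split_ifs <;> first | rfl | omega
  · rw [dif_neg h2, map_zero]
    have : j ≠ 2 := by omega
    rw [if_neg this]

open DualNumber in
lemma aeval_rPoly (n k : ℕ) (hn : 1 < n) (hk : 1 ≤ k) :
    aeval (fEval n) (rPoly n k) = 0 := by
  rw [rPoly, map_sum]
  simp only [map_mul, aeval_aVar n _ hn, aeval_bVar n _ hn]
  by_cases hk2 : k = 2
  · subst hk2
    rw [Finset.filter_true_of_mem (fun p hp => ?_)]
    · rw [Finset.Nat.sum_antidiagonal_eq_sum_range_succ_mk]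
      rw [Finset.sum_range_succ, Finset.sum_range_succ, Finset.sum_range_succ]
      norm_num
    · rw [Finset.HasAntidiagonal.mem_antidiagonal] at hp
      omega
  · apply Finset.sum_eq_zero
    intro p hp
    rw [Finset.mem_filter, Finset.HasAntidiagonal.mem_antidiagonal] at hp
    split_ifs with h1 h2 h3 h4 h5 h6 h7 h8 <;>
      first
        | (exfalso; omega)
        | simp [mul_neg, eps_mul_eps]

open DualNumber TrivSqZeroExt in
/-- For `n > 1`, in `R = ℚ[a₁, …, a_n, b₁, …, b_n]`, the element `a₂ - b₂`
does not belong to the ideal generated by `r₁, …, r_{2n}`,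
where `r_k = Σ_{i+j=k, 0 ≤ i ≤ n, 0 ≤ j ≤ n} a_i b_j` (with `a₀ = b₀ = 1`). -/
theorem a2_sub_b2_not_mem_span_whitney (n : ℕ) (hn : 1 < n) :
    aVar n 2 - bVar n 2 ∉ Ideal.span ((fun k => rPoly n k) '' Set.Icc 1 (2 * n)) := by
  intro hmem
  have hker : Ideal.span ((fun k => rPoly n k) '' Set.Icc 1 (2 * n)) ≤
      RingHom.ker (aeval (fEval n) : MvPolynomial (Fin n ⊕ Fin n) ℚ →ₐ[ℚ] DualNumber ℚ) := by
    rw [Ideal.span_le]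
    rintro _ ⟨k, hk, rfl⟩
    exact aeval_rPoly n k hn hk.1
  have h0 : aeval (fEval n) (aVar n 2 - bVar n 2) = 0 := hker hmem
  rw [map_sub, aeval_aVar n 2 hn, aeval_bVar n 2 hn] at h0
  rw [if_neg (by norm_num : (2:ℕ) ≠ 0), if_pos rfl,
    if_neg (by norm_num : (2:ℕ) ≠ 0), if_pos rfl, sub_neg_eq_add] at h0
  have h2 : TrivSqZeroExt.snd (ε + ε : DualNumber ℚ) = (0 : ℚ) := by
    rw [h0]; rfl
  rw [TrivSqZeroExt.snd_add] at h2
  have h3 : TrivSqZeroExt.snd (ε : DualNumber ℚ) = (1 : ℚ) := rfl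
  rw [h3] at h2
  norm_num at h2
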